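/- An irrational x ∈ [0,1] is a Liouville number (for every c > 0 there are infinitely many rationals p/q with |x − p/q| ≤ q^{−c}) if and only if for every c > 0 there exist infinitely many n with log(1 + ω_n) ≥ c ∑_{j=0}^{n−1} log(1 + ω_j), where ω_j are the partial quotients of x. -/

import Mathlib

open Real Set

/-- The Gauss map. -/
noncomputable def gaussMap (x : ℝ) : ℝ := if x = 0 then 0 else 1 / x - ⌊1 / x⌋

/-- The n-th partial quotient of x. -/
noncomputable def cfOmega (x : ℝ) (n : ℕ) : ℕ := (⌊1 / (gaussMap^[n] x)⌋).toNat

/-- (q_{n-1}, q_n) for the convergent denominators of x, with q_{-1} = 0, q_0 = 1. -/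
noncomputable def cfQPair (x : ℝ) : ℕ → ℕ × ℕ
  | 0 => (0, 1)
  | n + 1 => ((cfQPair x n).2, cfOmega x n * (cfQPair x n).2 + (cfQPair x n).1)

/-- The denominator q_n of the n-th convergent of x. -/
noncomputable def cfQ (x : ℝ) (n : ℕ) : ℕ := (cfQPair x n).2

/-- (p_{n-1}, p_n) for the convergent numerators of x, with p_{-1} = 1, p_0 = 0. -/
noncomputable def cfPPair (x : ℝ) : ℕ → ℕ × ℕ
  | 0 => (1, 0)
  | n + 1 => ((cfPPair x n).2, cfOmega x n * (cfPPair x n).2 + (cfPPair x n).1)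

/-- The numerator p_n of the n-th convergent of x. -/
noncomputable def cfP (x : ℝ) (n : ℕ) : ℕ := (cfPPair x n).2

section Aux

variable {x : ℝ}

lemma gauss_step {y : ℝ} (hy : y ∈ Set.Ioo (0:ℝ) 1) (hir : Irrational y) :
    gaussMap y ∈ Set.Ioo (0:ℝ) 1 ∧ Irrational (gaussMap y) := by
  have hy0 : y ≠ 0 := ne_of_gt hy.1
  have hinv : Irrational (1 / y) := by
    simpa [one_div] using hir.inv
  have hg : gaussMap y = Int.fract (1 / y) := by
    rw [gaussMap, if_neg hy0, Int.self_sub_floor]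
  have hirg : Irrational (gaussMap y) := by
    rw [hg, ← Int.self_sub_floor]; exact hinv.sub_intCast _
  refine ⟨⟨?_, ?_⟩, hirg⟩
  · rw [hg]
    rcases lt_or_eq_of_le (Int.fract_nonneg (1/y)) with h | h
    · exact h
    · exfalso
      have : (1/y : ℝ) = ⌊(1/y : ℝ)⌋ := by
        have := Int.fract_add_floor (1/y)
        rw [← h] at this; simpa using this.symm
      exact hinv.ne_int _ this
  · rw [hg]; exact Int.fract_lt_one _

lemma iter_mem {x : ℝ} (hx : x ∈ Icc (0:ℝ) 1) (hirr : Irrational x) (n : ℕ) :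
    gaussMap^[n] x ∈ Set.Ioo (0:ℝ) 1 ∧ Irrational (gaussMap^[n] x) := by
  induction n with
  | zero =>
    refine ⟨⟨lt_of_le_of_ne hx.1 ?_, lt_of_le_of_ne hx.2 ?_⟩, hirr⟩
    · intro h; exact hirr.ne_int 0 (by simpa using h.symm)
    · intro h; exact hirr.ne_int 1 (by simpa using h)
  | succ n ih =>
    rw [Function.iterate_succ_apply']
    exact gauss_step ih.1 ih.2

lemma omega_cast {x : ℝ} (hx : x ∈ Icc (0:ℝ) 1) (hirr : Irrational x) (n : ℕ) :
    (cfOmega x n : ℝ) = ((⌊1 / gaussMap^[n] x⌋ : ℤ) : ℝ) := by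
  obtain ⟨⟨h0, h1⟩, -⟩ := iter_mem hx hirr n
  have h2 : (1:ℝ) < 1 / gaussMap^[n] x := one_lt_one_div h0 h1
  have hf : 0 ≤ ⌊1 / gaussMap^[n] x⌋ := Int.le_floor.mpr (by push_cast; linarith)
  rw [cfOmega]
  exact_mod_cast congrArg (Int.cast : ℤ → ℝ) (Int.toNat_of_nonneg hf)

lemma omega_pos {x : ℝ} (hx : x ∈ Icc (0:ℝ) 1) (hirr : Irrational x) (n : ℕ) :
    1 ≤ cfOmega x n := by
  obtain ⟨⟨h0, h1⟩, -⟩ := iter_mem hx hirr n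
  have h2 : (1:ℝ) < 1 / gaussMap^[n] x := one_lt_one_div h0 h1
  have hf : (1:ℤ) ≤ ⌊1 / gaussMap^[n] x⌋ := Int.le_floor.mpr (by push_cast; linarith)
  rw [cfOmega]; omega

lemma gauss_rec {x : ℝ} (hx : x ∈ Icc (0:ℝ) 1) (hirr : Irrational x) (n : ℕ) :
    1 / gaussMap^[n] x = (cfOmega x n : ℝ) + gaussMap^[n+1] x := by
  obtain ⟨⟨h0, h1⟩, -⟩ := iter_mem hx hirr n
  rw [Function.iterate_succ_apply', omega_cast hx hirr n]
  rw [gaussMap, if_neg (ne_of_gt h0)]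
  ring

lemma cfQ_succ (n : ℕ) : cfQ x (n+1) = cfOmega x n * cfQ x n + (cfQPair x n).1 := rfl
lemma cfQPair_fst (n : ℕ) : (cfQPair x (n+1)).1 = cfQ x n := rfl
lemma cfQ_zero : cfQ x 0 = 1 := rfl
lemma cfQPair_fst_zero : (cfQPair x 0).1 = 0 := rfl

lemma cfQ_pos (hx : x ∈ Icc (0:ℝ) 1) (hirr : Irrational x) (n : ℕ) : 1 ≤ cfQ x n := by
  induction n with
  | zero => simp [cfQ_zero]
  | succ n ih =>
    have := omega_pos hx hirr n
    rw [cfQ_succ]; nlinarith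

lemma cfQPair_fst_le (hx : x ∈ Icc (0:ℝ) 1) (hirr : Irrational x) (n : ℕ) :
    (cfQPair x n).1 ≤ (cfQPair x n).2 := by
  cases n with
  | zero => simp [cfQPair]
  | succ n =>
    have := omega_pos hx hirr n
    show cfQ x n ≤ cfOmega x n * cfQ x n + (cfQPair x n).1
    nlinarith

lemma cfQ_mono (hx : x ∈ Icc (0:ℝ) 1) (hirr : Irrational x) (n : ℕ) :
    cfQ x n ≤ cfQ x (n+1) := by
  have := omega_pos hx hirr n
  rw [cfQ_succ]; nlinarith

lemma cfQ_mono' (hx : x ∈ Icc (0:ℝ) 1) (hirr : Irrational x) {m n : ℕ} (h : m ≤ n) :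
    cfQ x m ≤ cfQ x n := by
  induction n with
  | zero => simpa [Nat.le_zero.mp h]
  | succ n ih =>
    rcases Nat.lt_or_ge m (n+1) with h' | h'
    · exact le_trans (ih (Nat.lt_succ_iff.mp h')) (cfQ_mono hx hirr n)
    · have : m = n + 1 := le_antisymm h h'
      simp [this]

lemma cfQ_strict (hx : x ∈ Icc (0:ℝ) 1) (hirr : Irrational x) (n : ℕ) :
    cfQ x (n+1) < cfQ x (n+2) := by
  have h1 := omega_pos hx hirr (n+1)
  have h2 := cfQ_pos hx hirr n
  rw [show cfQ x (n+2) = cfOmega x (n+1) * cfQ x (n+1) + cfQ x n from rfl]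
  nlinarith

lemma cfQ_two_pow (hx : x ∈ Icc (0:ℝ) 1) (hirr : Irrational x) (n : ℕ) :
    2 ^ n ≤ cfQ x n * cfQ x (n+1) := by
  induction n with
  | zero => simpa [cfQ_zero] using cfQ_pos hx hirr 1
  | succ n ih =>
    have h1 := omega_pos hx hirr (n+1)
    have h2 := cfQ_mono hx hirr n
    have h3 := cfQ_pos hx hirr n
    have h4 : cfQ x (n+2) = cfOmega x (n+1) * cfQ x (n+1) + cfQ x n := by
      rw [cfQ_succ, cfQPair_fst]
    calc 2 ^ (n+1) = 2 * 2 ^ n := by ring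
    _ ≤ 2 * (cfQ x n * cfQ x (n+1)) := by omega
    _ ≤ cfQ x (n+1) * cfQ x (n+2) := by rw [h4]; nlinarith [mul_le_mul_left h2 (cfQ x (n+1)), mul_le_mul_left h1 (cfQ x (n+1) * cfQ x (n+1))]

lemma gauss_rec' (hx : x ∈ Icc (0:ℝ) 1) (hirr : Irrational x) (n : ℕ) :
    gaussMap^[n] x * ((cfOmega x n : ℝ) + gaussMap^[n+1] x) = 1 := by
  have h0 := (iter_mem hx hirr n).1.1
  rw [← gauss_rec hx hirr n]
  field_simp

lemma cfKey (hx : x ∈ Icc (0:ℝ) 1) (hirr : Irrational x) (n : ℕ) :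
    x * (((cfQPair x n).2 : ℝ) + gaussMap^[n] x * ((cfQPair x n).1 : ℝ))
      = ((cfPPair x n).2 : ℝ) + gaussMap^[n] x * ((cfPPair x n).1 : ℝ) := by
  induction n with
  | zero => simp [cfQPair, cfPPair]
  | succ n ih =>
    have ht0 : gaussMap^[n] x ≠ 0 := ne_of_gt (iter_mem hx hirr n).1.1
    have h2 := gauss_rec' hx hirr n
    apply mul_left_cancel₀ ht0
    show gaussMap^[n] x * (x * (((cfQPair x (n+1)).2 : ℝ) + gaussMap^[n+1] x * ((cfQPair x (n+1)).1 : ℝ))) = _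
    rw [show (cfQPair x (n+1)) = ((cfQPair x n).2, cfOmega x n * (cfQPair x n).2 + (cfQPair x n).1) from rfl,
        show (cfPPair x (n+1)) = ((cfPPair x n).2, cfOmega x n * (cfPPair x n).2 + (cfPPair x n).1) from rfl]
    push_cast
    linear_combination ih + (x * ((cfQPair x n).2 : ℝ) - ((cfPPair x n).2 : ℝ)) * h2

lemma cfDet (n : ℕ) :
    ((cfPPair x n).1 : ℝ) * ((cfQPair x n).2 : ℝ) - ((cfPPair x n).2 : ℝ) * ((cfQPair x n).1 : ℝ)
      = (-1 : ℝ)^n := by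
  induction n with
  | zero => simp [cfQPair, cfPPair]
  | succ n ih =>
    rw [show (cfQPair x (n+1)) = ((cfQPair x n).2, cfOmega x n * (cfQPair x n).2 + (cfQPair x n).1) from rfl,
        show (cfPPair x (n+1)) = ((cfPPair x n).2, cfOmega x n * (cfPPair x n).2 + (cfPPair x n).1) from rfl]
    push_cast
    ring_nf
    ring_nf at ih
    linear_combination -ih

lemma cfErr (hx : x ∈ Icc (0:ℝ) 1) (hirr : Irrational x) (n : ℕ) :
    |x - (cfP x n : ℝ) / (cfQ x n : ℝ)|
      = 1 / ((cfQ x n : ℝ) * ((cfQ x (n+1) : ℝ) + gaussMap^[n+1] x * (cfQ x n : ℝ))) := by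
  have ht1 : 0 < gaussMap^[n] x := (iter_mem hx hirr n).1.1
  have hs0 : 0 < gaussMap^[n+1] x := (iter_mem hx hirr (n+1)).1.1
  have hd1 : (1:ℝ) ≤ ((cfQPair x n).2 : ℝ) := by exact_mod_cast cfQ_pos hx hirr n
  have hc0 : (0:ℝ) ≤ ((cfQPair x n).1 : ℝ) := Nat.cast_nonneg _
  have key := cfKey hx hirr n
  have det := cfDet (x := x) n
  have trec := gauss_rec' hx hirr n
  have hQ : (cfQ x (n+1) : ℝ) = (cfOmega x n : ℝ) * ((cfQPair x n).2 : ℝ) + ((cfQPair x n).1 : ℝ) := by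
    rw [show cfQ x (n+1) = cfOmega x n * (cfQPair x n).2 + (cfQPair x n).1 from rfl]
    push_cast; ring
  have hQ1 : (1:ℝ) ≤ (cfQ x (n+1) : ℝ) := by exact_mod_cast cfQ_pos hx hirr (n+1)
  set t := gaussMap^[n] x with ht
  set s := gaussMap^[n+1] x with hs
  set a : ℝ := ((cfPPair x n).1 : ℝ) with ha
  set b : ℝ := ((cfPPair x n).2 : ℝ) with hb
  set c : ℝ := ((cfQPair x n).1 : ℝ) with hc
  set d : ℝ := ((cfQPair x n).2 : ℝ) with hd
  have hD : (0:ℝ) < d + t * c := by nlinarith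
  have hd0 : d ≠ 0 := by linarith
  have hbd : b / d * d = b := div_mul_cancel₀ b hd0
  have h5 : x - b / d = t * (-1:ℝ)^n / (d * (d + t * c)) := by
    rw [eq_div_iff (by nlinarith : (d * (d + t * c)) ≠ 0)]
    linear_combination d * key + t * det - (d + t * c) * hbd
  have h6 : |x - b / d| = t / (d * (d + t * c)) := by
    rw [h5, abs_div, abs_mul, abs_pow, abs_neg, abs_one, one_pow, mul_one,
        abs_of_pos ht1, abs_of_pos (by nlinarith : (0:ℝ) < d * (d + t * c))]
  have h7 : d + t * c = t * ((cfQ x (n+1) : ℝ) + s * d) := by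
    rw [hQ]; linear_combination (-d) * trec
  have hQs : (0:ℝ) < (cfQ x (n+1) : ℝ) + s * d := by nlinarith
  show |x - b / d| = 1 / (d * ((cfQ x (n+1) : ℝ) + s * d))
  rw [h6, h7, div_eq_div_iff (by positivity) (by positivity)]
  ring

lemma cfErr_lt (hx : x ∈ Icc (0:ℝ) 1) (hirr : Irrational x) (n : ℕ) :
    |x - (cfP x n : ℝ) / (cfQ x n : ℝ)| < 1 / ((cfQ x n : ℝ) * (cfQ x (n+1) : ℝ)) := by
  rw [cfErr hx hirr n]
  have hs0 : 0 < gaussMap^[n+1] x := (iter_mem hx hirr (n+1)).1.1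
  have hd : (1:ℝ) ≤ (cfQ x n : ℝ) := by exact_mod_cast cfQ_pos hx hirr n
  have hQ : (1:ℝ) ≤ (cfQ x (n+1) : ℝ) := by exact_mod_cast cfQ_pos hx hirr (n+1)
  have h1 : (0:ℝ) < (cfQ x n : ℝ) := by linarith
  have h2 : (0:ℝ) < (cfQ x (n+1) : ℝ) + gaussMap^[n+1] x * (cfQ x n : ℝ) := by nlinarith
  have h3 : (0:ℝ) < gaussMap^[n+1] x * ((cfQ x n : ℝ) * (cfQ x n : ℝ)) :=
    mul_pos hs0 (mul_pos h1 h1)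
  exact one_div_lt_one_div_of_lt (by nlinarith) (by nlinarith)

lemma cfErr_gt (hx : x ∈ Icc (0:ℝ) 1) (hirr : Irrational x) (n : ℕ) :
    1 / ((cfQ x n : ℝ) * ((cfQ x n : ℝ) + (cfQ x (n+1) : ℝ)))
      < |x - (cfP x n : ℝ) / (cfQ x n : ℝ)| := by
  rw [cfErr hx hirr n]
  have hs1 : gaussMap^[n+1] x < 1 := (iter_mem hx hirr (n+1)).1.2
  have hs0 : 0 < gaussMap^[n+1] x := (iter_mem hx hirr (n+1)).1.1
  have hd : (1:ℝ) ≤ (cfQ x n : ℝ) := by exact_mod_cast cfQ_pos hx hirr n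
  have hQ : (1:ℝ) ≤ (cfQ x (n+1) : ℝ) := by exact_mod_cast cfQ_pos hx hirr (n+1)
  have h1 : (0:ℝ) < (cfQ x n : ℝ) := by linarith
  have h2 : (0:ℝ) < (cfQ x (n+1) : ℝ) + gaussMap^[n+1] x * (cfQ x n : ℝ) := by nlinarith
  have h3 : gaussMap^[n+1] x * ((cfQ x n : ℝ) * (cfQ x n : ℝ)) < 1 * ((cfQ x n : ℝ) * (cfQ x n : ℝ)) :=
    mul_lt_mul_of_pos_right hs1 (mul_pos h1 h1)
  exact one_div_lt_one_div_of_lt (mul_pos h1 h2) (by nlinarith)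

lemma le_prod_q (hx : x ∈ Icc (0:ℝ) 1) (hirr : Irrational x) (n : ℕ) :
    ∏ j ∈ Finset.range n, cfOmega x j ≤ cfQ x n := by
  induction n with
  | zero => simp [cfQ, cfQPair]
  | succ n ih =>
    rw [Finset.prod_range_succ]
    calc (∏ j ∈ Finset.range n, cfOmega x j) * cfOmega x n ≤ cfQ x n * cfOmega x n :=
          Nat.mul_le_mul_right _ ih
    _ ≤ cfOmega x n * cfQ x n + (cfQPair x n).1 := by rw [mul_comm]; omega
    _ = cfQ x (n+1) := rfl

lemma q_le_prod (hx : x ∈ Icc (0:ℝ) 1) (hirr : Irrational x) (n : ℕ) :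
    cfQ x n ≤ ∏ j ∈ Finset.range n, (1 + cfOmega x j) := by
  induction n with
  | zero => simp [cfQ, cfQPair]
  | succ n ih =>
    rw [Finset.prod_range_succ]
    have h1 := cfQPair_fst_le hx hirr n
    calc cfQ x (n+1) = cfOmega x n * cfQ x n + (cfQPair x n).1 := rfl
    _ ≤ cfOmega x n * cfQ x n + cfQ x n := by
        have : (cfQPair x n).1 ≤ cfQ x n := h1
        omega
    _ = cfQ x n * (1 + cfOmega x n) := by ring
    _ ≤ (∏ j ∈ Finset.range n, (1 + cfOmega x j)) * (1 + cfOmega x n) :=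
        Nat.mul_le_mul_right _ ih

lemma log_q_le (hx : x ∈ Icc (0:ℝ) 1) (hirr : Irrational x) (n : ℕ) :
    Real.log (cfQ x n) ≤ ∑ j ∈ Finset.range n, Real.log (1 + (cfOmega x j : ℝ)) := by
  have h1 : (cfQ x n : ℝ) ≤ ∏ j ∈ Finset.range n, (1 + (cfOmega x j : ℝ)) := by
    have := q_le_prod hx hirr n
    exact_mod_cast this
  have h2 : Real.log (cfQ x n) ≤ Real.log (∏ j ∈ Finset.range n, (1 + (cfOmega x j : ℝ))) :=
    Real.log_le_log (by exact_mod_cast cfQ_pos hx hirr n) h1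
  rwa [Real.log_prod (fun j _ => by positivity)] at h2

lemma sum_log_omega_le (hx : x ∈ Icc (0:ℝ) 1) (hirr : Irrational x) (n : ℕ) :
    ∑ j ∈ Finset.range n, Real.log (cfOmega x j : ℝ) ≤ Real.log (cfQ x n) := by
  have h1 : (∏ j ∈ Finset.range n, (cfOmega x j : ℝ)) ≤ (cfQ x n : ℝ) := by
    exact_mod_cast le_prod_q hx hirr n
  have h0 : ∀ j ∈ Finset.range n, (cfOmega x j : ℝ) ≠ 0 := fun j _ => by
    have := omega_pos hx hirr j; positivity
  have h2 := Real.log_le_log (by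
    apply Finset.prod_pos; intro j hj
    have := omega_pos hx hirr j
    exact_mod_cast Nat.lt_of_lt_of_le Nat.zero_lt_one this) h1
  rwa [Real.log_prod h0] at h2

lemma log_omega_le_logq (hx : x ∈ Icc (0:ℝ) 1) (hirr : Irrational x) (n : ℕ) :
    Real.log (cfOmega x n : ℝ) ≤ Real.log (cfQ x (n+1)) := by
  refine le_trans ?_ (sum_log_omega_le hx hirr (n+1))
  refine Finset.single_le_sum (f := fun j => Real.log (cfOmega x j : ℝ)) ?_ (by simp)
  intro j _
  have := omega_pos hx hirr j
  exact Real.log_nonneg (by exact_mod_cast this)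

lemma logq_nonneg (hx : x ∈ Icc (0:ℝ) 1) (hirr : Irrational x) (n : ℕ) :
    0 ≤ Real.log (cfQ x n) :=
  Real.log_nonneg (by exact_mod_cast cfQ_pos hx hirr n)

lemma S_le_3log (hx : x ∈ Icc (0:ℝ) 1) (hirr : Irrational x) (n : ℕ) :
    ∑ j ∈ Finset.range n, Real.log (1 + (cfOmega x j : ℝ))
      ≤ 3 * Real.log (cfQ x n) + Real.log 2 := by
  have hterm : ∀ j ∈ Finset.range n, Real.log (1 + (cfOmega x j : ℝ))
      ≤ Real.log (cfOmega x j : ℝ) + Real.log 2 := by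
    intro j _
    have h1 : (1:ℕ) ≤ cfOmega x j := omega_pos hx hirr j
    have h1' : (1:ℝ) ≤ (cfOmega x j : ℝ) := by exact_mod_cast h1
    have : (1:ℝ) + cfOmega x j ≤ 2 * cfOmega x j := by linarith
    calc Real.log (1 + (cfOmega x j : ℝ)) ≤ Real.log (2 * cfOmega x j) :=
          Real.log_le_log (by linarith) this
    _ = Real.log 2 + Real.log (cfOmega x j) := Real.log_mul (by norm_num) (by linarith)
    _ = _ := by ring
  have h2 : ∑ j ∈ Finset.range n, Real.log (1 + (cfOmega x j : ℝ))
      ≤ ∑ j ∈ Finset.range n, (Real.log (cfOmega x j : ℝ) + Real.log 2) :=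
    Finset.sum_le_sum hterm
  rw [Finset.sum_add_distrib, Finset.sum_const, Finset.card_range, nsmul_eq_mul] at h2
  have h3 := sum_log_omega_le hx hirr n
  have h4 : (n:ℝ) * Real.log 2 ≤ 2 * Real.log (cfQ x n) + Real.log 2 := by
    cases n with
    | zero => simp; positivity
    | succ m =>
      have h5 : (2:ℕ) ^ m ≤ cfQ x (m+1) * cfQ x (m+1) := by
        calc (2:ℕ)^m ≤ cfQ x m * cfQ x (m+1) := cfQ_two_pow hx hirr m
        _ ≤ cfQ x (m+1) * cfQ x (m+1) := Nat.mul_le_mul_right _ (cfQ_mono hx hirr m)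
      have h5' : (2:ℝ) ^ m ≤ (cfQ x (m+1) : ℝ) * cfQ x (m+1) := by exact_mod_cast h5
      have h6 : Real.log ((2:ℝ)^m) ≤ Real.log ((cfQ x (m+1) : ℝ) * cfQ x (m+1)) :=
        Real.log_le_log (by positivity) h5'
      have hq1 : (1:ℝ) ≤ (cfQ x (m+1) : ℝ) := by exact_mod_cast cfQ_pos hx hirr (m+1)
      rw [Real.log_pow, Real.log_mul (by linarith) (by linarith)] at h6
      push_cast
      nlinarith [Real.log_pos (by norm_num : (1:ℝ) < 2)]
  linarith

lemma err_step (hx : x ∈ Icc (0:ℝ) 1) (hirr : Irrational x) (k : ℕ) :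
    |x - (cfP x (k+2) : ℝ) / (cfQ x (k+2) : ℝ)| < |x - (cfP x (k+1) : ℝ) / (cfQ x (k+1) : ℝ)| := by
  have h1 := cfErr_lt hx hirr (k+2)
  have h2 := cfErr_gt hx hirr (k+1)
  refine lt_trans h1 (lt_trans ?_ h2)
  have hs : cfQ x (k+1) * (cfQ x (k+1) + cfQ x (k+2)) < cfQ x (k+2) * cfQ x (k+3) := by
    have hstrict := cfQ_strict hx hirr k
    have hrec : cfQ x (k+3) = cfOmega x (k+2) * cfQ x (k+2) + cfQ x (k+1) := rfl
    have hω := omega_pos hx hirr (k+2)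
    have h3 : cfQ x (k+3) ≥ cfQ x (k+2) + cfQ x (k+1) := by rw [hrec]; nlinarith
    nlinarith [cfQ_pos hx hirr (k+1)]
  have hs' : ((cfQ x (k+1) : ℝ)) * ((cfQ x (k+1) : ℝ) + (cfQ x (k+2) : ℝ))
      < (cfQ x (k+2) : ℝ) * (cfQ x (k+3) : ℝ) := by exact_mod_cast hs
  apply one_div_lt_one_div_of_lt _ hs'
  have := cfQ_pos hx hirr (k+1)
  have h4 : (1:ℝ) ≤ (cfQ x (k+1) : ℝ) := by exact_mod_cast this
  have h5 : (1:ℝ) ≤ (cfQ x (k+2) : ℝ) := by exact_mod_cast cfQ_pos hx hirr (k+2)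
  nlinarith

lemma err_mono (hx : x ∈ Icc (0:ℝ) 1) (hirr : Irrational x) {m n : ℕ} (h1 : 1 ≤ m)
    (hmn : m < n) :
    |x - (cfP x n : ℝ) / (cfQ x n : ℝ)| < |x - (cfP x m : ℝ) / (cfQ x m : ℝ)| := by
  induction n with
  | zero => omega
  | succ n ih =>
    rcases Nat.lt_or_ge m n with h | h
    · obtain ⟨k, rfl⟩ : ∃ k, n = k + 1 := ⟨n - 1, by omega⟩
      exact lt_trans (err_step hx hirr k) (ih h)
    · have : m = n := by omega
      subst this
      obtain ⟨k, rfl⟩ : ∃ k, m = k + 1 := ⟨m - 1, by omega⟩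
      exact err_step hx hirr k

lemma dir_mpr (hx : x ∈ Icc (0:ℝ) 1) (hirr : Irrational x)
    (H : ∀ c : ℝ, 0 < c →
        {n : ℕ | c * ∑ j ∈ Finset.range n, Real.log (1 + (cfOmega x j : ℝ))
          ≤ Real.log (1 + (cfOmega x n : ℝ))}.Infinite)
    (c : ℝ) (hc : 0 < c) :
    {r : ℚ | |x - (r : ℝ)| ≤ (r.den : ℝ) ^ (-c)}.Infinite := by
  set S : ℕ → ℝ := fun n => ∑ j ∈ Finset.range n, Real.log (1 + (cfOmega x j : ℝ)) with hS
  have hM : ({n : ℕ | (c+1) * S n ≤ Real.log (1 + (cfOmega x n : ℝ))} \ Set.Iio 3).Infinite :=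
    (H (c+1) (by linarith)).diff (Set.finite_Iio 3)
  set M := {n : ℕ | (c+1) * S n ≤ Real.log (1 + (cfOmega x n : ℝ))} \ Set.Iio 3 with hMdef
  set f : ℕ → ℚ := fun n => (cfP x n : ℚ) / (cfQ x n : ℚ) with hf
  have hcast : ∀ n, ((f n : ℚ) : ℝ) = (cfP x n : ℝ) / (cfQ x n : ℝ) := by
    intro n
    show (((cfP x n : ℚ) / (cfQ x n : ℚ) : ℚ) : ℝ) = _
    push_cast; ring
  have hq2 : ∀ n ∈ M, 2 ≤ cfQ x n := by
    intro n hn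
    have h3 : 3 ≤ n := by
      have := hn.2; simpa [Set.mem_Iio, not_lt] using this
    have h4 : (4:ℕ) ≤ cfQ x 3 * cfQ x 3 := by
      calc (4:ℕ) = 2^2 := rfl
      _ ≤ cfQ x 2 * cfQ x 3 := cfQ_two_pow hx hirr 2
      _ ≤ cfQ x 3 * cfQ x 3 := Nat.mul_le_mul_right _ (cfQ_mono' hx hirr (by omega))
    have h5 : 2 ≤ cfQ x 3 := by nlinarith
    exact le_trans h5 (cfQ_mono' hx hirr h3)
  -- key approximation bound
  have hmem : ∀ n ∈ M, f n ∈ {r : ℚ | |x - (r : ℝ)| ≤ (r.den : ℝ) ^ (-c)} := by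
    intro n hn
    have hq1 : (1:ℝ) ≤ (cfQ x n : ℝ) := by exact_mod_cast cfQ_pos hx hirr n
    have hQ1 : (1:ℝ) ≤ (cfQ x (n+1) : ℝ) := by exact_mod_cast cfQ_pos hx hirr (n+1)
    have hq2' : (2:ℝ) ≤ (cfQ x n : ℝ) := by exact_mod_cast hq2 n hn
    -- den (f n) ≤ cfQ x n
    have hden : ((f n).den : ℕ) ≤ cfQ x n := by
      have h1 : f n = Rat.divInt (cfP x n : ℤ) (cfQ x n : ℤ) := by
        rw [Rat.divInt_eq_div]; push_cast; rfl
      have h2 : ((f n).den : ℤ) ∣ (cfQ x n : ℤ) := by rw [h1]; exact Rat.den_dvd _ _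
      have h3 : (0:ℤ) < (cfQ x n : ℤ) := by exact_mod_cast cfQ_pos hx hirr n
      exact_mod_cast Int.le_of_dvd h3 h2
    have hden1 : 1 ≤ (f n).den := (f n).pos
    -- log inequality chain
    have hlogq : Real.log (cfQ x n) ≤ S n := log_q_le hx hirr n
    have hlogQ : (c+1) * S n - Real.log 2 ≤ Real.log (cfQ x (n+1)) := by
      have h1 : (c+1) * S n ≤ Real.log (1 + (cfOmega x n : ℝ)) := hn.1
      have hω : (1:ℝ) ≤ (cfOmega x n : ℝ) := by exact_mod_cast omega_pos hx hirr n
      have h2 : Real.log (1 + (cfOmega x n : ℝ)) ≤ Real.log 2 + Real.log (cfOmega x n : ℝ) := by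
        rw [← Real.log_mul (by norm_num) (by linarith)]
        exact Real.log_le_log (by linarith) (by linarith)
      have h3 := log_omega_le_logq hx hirr n
      linarith
    have hlog2 : Real.log 2 ≤ Real.log (cfQ x n) := Real.log_le_log (by norm_num) hq2'
    have hSnn : 0 ≤ S n := le_trans (Real.log_nonneg hq1) hlogq
    have hmain : c * Real.log (cfQ x n) ≤ Real.log ((cfQ x n : ℝ) * (cfQ x (n+1) : ℝ)) := by
      rw [Real.log_mul (by linarith) (by linarith)]
      have : (c+1) * Real.log (cfQ x n) ≤ (c+1) * S n := by
        apply mul_le_mul_of_nonneg_left hlogq (by linarith)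
      nlinarith [Real.log_nonneg hq1]
    -- convert to q^c ≤ q*Q
    have hpow : (cfQ x n : ℝ) ^ (c : ℝ) ≤ (cfQ x n : ℝ) * (cfQ x (n+1) : ℝ) := by
      rw [← Real.log_le_log_iff (Real.rpow_pos_of_pos (by linarith) c) (by nlinarith),
          Real.log_rpow (by linarith)]
      exact hmain
    have herr : |x - ((f n : ℚ) : ℝ)| ≤ ((cfQ x n : ℝ)) ^ (-c) := by
      rw [hcast n, Real.rpow_neg (by linarith)]
      have h1 := cfErr_lt hx hirr n
      have h2 : 1 / ((cfQ x n : ℝ) * (cfQ x (n+1) : ℝ)) ≤ ((cfQ x n : ℝ) ^ (c:ℝ))⁻¹ := by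
        rw [one_div]
        exact inv_anti₀ (Real.rpow_pos_of_pos (by linarith) c) hpow
      linarith
    have hfinal : ((cfQ x n : ℝ)) ^ (-c) ≤ ((f n).den : ℝ) ^ (-c) := by
      apply Real.rpow_le_rpow_of_nonpos _ _ (by linarith)
      · exact_mod_cast (f n).pos
      · exact_mod_cast hden
    exact le_trans herr hfinal
  have hinj : Set.InjOn f M := by
    intro m hm n hn hfeq
    by_contra hne
    have h1m : 1 ≤ m := by
      have := hm.2; simp only [Set.mem_Iio, not_lt] at this; omega
    have h1n : 1 ≤ n := by
      have := hn.2; simp only [Set.mem_Iio, not_lt] at this; omega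
    have heq : (cfP x m : ℝ) / (cfQ x m : ℝ) = (cfP x n : ℝ) / (cfQ x n : ℝ) := by
      rw [← hcast m, ← hcast n, hfeq]
    rcases Nat.lt_or_ge m n with h | h
    · have := err_mono hx hirr h1m h
      rw [heq] at this; exact lt_irrefl _ this
    · have hlt : n < m := by omega
      have := err_mono hx hirr h1n hlt
      rw [heq] at this; exact lt_irrefl _ this
  exact Set.infinite_of_injOn_mapsTo hinj hmem hM

set_option maxHeartbeats 1000000 in
lemma dir_mp (hx : x ∈ Icc (0:ℝ) 1) (hirr : Irrational x)
    (H : ∀ c : ℝ, 0 < c → {r : ℚ | |x - (r : ℝ)| ≤ (r.den : ℝ) ^ (-c)}.Infinite)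
    (c : ℝ) (hc : 0 < c) :
    {n : ℕ | c * ∑ j ∈ Finset.range n, Real.log (1 + (cfOmega x j : ℝ))
      ≤ Real.log (1 + (cfOmega x n : ℝ))}.Infinite := by
  set S : ℕ → ℝ := fun n => ∑ j ∈ Finset.range n, Real.log (1 + (cfOmega x j : ℝ)) with hS
  by_contra hfin
  rw [Set.not_infinite] at hfin
  obtain ⟨N0, hN0⟩ := hfin.bddAbove
  set N := N0 + 1 with hN
  have hsmall : ∀ n, N ≤ n → Real.log (1 + (cfOmega x n : ℝ)) < c * S n := by
    intro n hn
    by_contra h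
    push_neg at h
    have : n ≤ N0 := hN0 h
    omega
  set K : ℝ := 3 * (c + 1) with hK
  set L : ℝ := (c + 1) * Real.log 2 with hL
  have hlog2 : (0:ℝ) < Real.log 2 := Real.log_pos (by norm_num)
  have hLpos : 0 < L := by positivity
  have hKpos : (0:ℝ) < K := by positivity
  have hgrow : ∀ n, N ≤ n → Real.log (cfQ x (n+1)) ≤ K * Real.log (cfQ x n) + L := by
    intro n hn
    have h1 : Real.log (cfQ x (n+1)) ≤ S (n+1) := log_q_le hx hirr (n+1)
    have h2 : S (n+1) = S n + Real.log (1 + (cfOmega x n : ℝ)) := Finset.sum_range_succ _ n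
    have h3 := hsmall n hn
    have h4 : S n ≤ 3 * Real.log (cfQ x n) + Real.log 2 := S_le_3log hx hirr n
    have hSnn : 0 ≤ S n := by
      have := logq_nonneg hx hirr n
      linarith [log_q_le hx hirr n]
    have h5 : S (n+1) ≤ (1 + c) * S n := by rw [h2]; nlinarith
    have h6 : (1 + c) * S n ≤ (1 + c) * (3 * Real.log (cfQ x n) + Real.log 2) := by nlinarith
    rw [hK, hL]; nlinarith
  set c' : ℝ := K + 3 with hc'
  have hc'pos : 0 < c' := by positivity
  set B : ℝ := max (cfQ x N : ℝ) (2 * Real.exp L) with hB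
  -- every rational in the set has denominator bounded by B
  have hdenb : ∀ r : ℚ, |x - (r : ℝ)| ≤ (r.den : ℝ) ^ (-c') → (r.den : ℝ) ≤ B := by
    intro r hr
    set q : ℕ := r.den with hqdef
    have hq1 : 1 ≤ q := r.pos
    have hqr1 : (1:ℝ) ≤ (q:ℝ) := by exact_mod_cast hq1
    have hqrpos : (0:ℝ) < (q:ℝ) := by linarith
    -- find n with q_n ≤ q < q_{n+1}
    have hbnd : ∀ k, cfQ x k ≤ q → k ≤ q * q := by
      intro k hk
      cases k with
      | zero => positivity
      | succ m =>
        have h1 : 2 ^ m ≤ cfQ x m * cfQ x (m+1) := cfQ_two_pow hx hirr m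
        have h2 : cfQ x m ≤ cfQ x (m+1) := cfQ_mono hx hirr m
        have h3 : 2 ^ m ≤ q * q := by nlinarith
        have h4 := Nat.lt_two_pow_self (n := m)
        omega
    have hP0 : cfQ x 0 ≤ q := by
      have : cfQ x 0 = 1 := rfl
      omega
    obtain ⟨n, hn1, hn2⟩ : ∃ n, cfQ x n ≤ q ∧ q < cfQ x (n+1) := by
      classical
      refine ⟨Nat.findGreatest (fun k => cfQ x k ≤ q) (q * q + 1), ?_, ?_⟩
      · exact Nat.findGreatest_spec (P := fun k => cfQ x k ≤ q) (m := 0) (n := q*q+1)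
          (Nat.zero_le _) hP0
      · by_contra h
        push_neg at h
        have h1 : Nat.findGreatest (fun k => cfQ x k ≤ q) (q * q + 1) + 1 ≤ q * q + 1 := by
          have := hbnd (Nat.findGreatest (fun k => cfQ x k ≤ q) (q * q + 1) + 1) h
          omega
        exact Nat.findGreatest_is_greatest (P := fun k => cfQ x k ≤ q)
          (Nat.lt_succ_self _) h1 h
    rcases Nat.lt_or_ge n N with hcase | hcase
    · -- small case
      have h1 : cfQ x (n+1) ≤ cfQ x N := cfQ_mono' hx hirr (by omega)
      have : (q : ℝ) ≤ (cfQ x N : ℝ) := by exact_mod_cast le_of_lt (lt_of_lt_of_le hn2 h1)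
      exact le_trans this (le_max_left _ _)
    · -- main case
      have hqn1 : (1:ℝ) ≤ (cfQ x n : ℝ) := by exact_mod_cast cfQ_pos hx hirr n
      have hqnq : (cfQ x n : ℝ) ≤ (q:ℝ) := by exact_mod_cast hn1
      have hQq : (q:ℝ) + 1 ≤ (cfQ x (n+1) : ℝ) := by exact_mod_cast hn2
      have hqnQ : (cfQ x n : ℝ) ≤ (cfQ x (n+1) : ℝ) := by exact_mod_cast cfQ_mono hx hirr n
      have hQ1 : (1:ℝ) ≤ (cfQ x (n+1) : ℝ) := by linarith
      set Q : ℝ := (cfQ x (n+1) : ℝ) with hQ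
      set qn : ℝ := (cfQ x n : ℝ) with hqn'
      -- lower bound on |x - r|
      have hlow : 1 / (2 * (q:ℝ) * q * Q) ≤ |x - (r : ℝ)| := by
        by_cases hcase2 : (r : ℝ) = (cfP x n : ℝ) / (cfQ x n : ℝ)
        · have h1 := cfErr_gt hx hirr n
          rw [← hcase2] at h1
          have h2 : qn * (qn + Q) ≤ 2 * (q:ℝ) * q * Q := by
            have ha : qn * (qn + Q) ≤ (q:ℝ) * (2*Q) :=
              mul_le_mul hqnq (by linarith) (by linarith) (by linarith)
            nlinarith [mul_nonneg (mul_nonneg (by linarith : (0:ℝ) ≤ (q:ℝ) - 1)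
              (by linarith : (0:ℝ) ≤ (q:ℝ))) (by linarith : (0:ℝ) ≤ Q)]
          have h3 : 1 / (2 * (q:ℝ) * q * Q) ≤ 1 / (qn * (qn + Q)) := by
            apply one_div_le_one_div_of_le (by nlinarith) h2
          linarith
        · set z : ℤ := r.num * (cfQ x n) - (cfP x n) * (r.den) with hz
          have hdenpos : (0:ℝ) < (r.den : ℝ) := by exact_mod_cast r.pos
          have hqnpos : (0:ℝ) < qn := by linarith
          have hzne : z ≠ 0 := by
            intro h0
            apply hcase2
            have h1 : ((z : ℤ) : ℝ) = 0 := by exact_mod_cast congrArg (Int.cast : ℤ → ℝ) h0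
            rw [hz] at h1
            push_cast at h1
            rw [Rat.cast_def, div_eq_div_iff hdenpos.ne' hqnpos.ne']
            linarith
          have hdiff : (r : ℝ) - (cfP x n : ℝ) / (cfQ x n : ℝ) = (z : ℝ) / ((q:ℝ) * qn) := by
            rw [Rat.cast_def, hz]
            push_cast
            have h0' : (cfQ x n : ℝ) ≠ 0 := hqnpos.ne'
            rw [hqn', hqdef]
            field_simp
          have habs : 1 / ((q:ℝ) * qn) ≤ |(r : ℝ) - (cfP x n : ℝ) / (cfQ x n : ℝ)| := by
            rw [hdiff, abs_div, abs_of_pos (by positivity : (0:ℝ) < (q:ℝ) * qn)]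
            apply div_le_div_of_nonneg_right ?_ (by positivity)
            · have : (1:ℤ) ≤ |z| := Int.one_le_abs hzne
              exact_mod_cast this
          have herr := cfErr_lt hx hirr n
          have htri : |(r : ℝ) - (cfP x n : ℝ) / (cfQ x n : ℝ)|
              ≤ |x - (r : ℝ)| + |x - (cfP x n : ℝ) / (cfQ x n : ℝ)| := by
            have h1 := abs_add_le ((r:ℝ) - x) (x - (cfP x n : ℝ) / (cfQ x n : ℝ))
            rw [sub_add_sub_cancel] at h1
            rw [abs_sub_comm x (r:ℝ)]
            exact h1
          have hstep : 1 / ((q:ℝ) * qn) - 1 / (qn * Q) ≤ |x - (r:ℝ)| := by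
            have := herr
            linarith
          have halg : 1 / (2 * (q:ℝ) * q * Q) ≤ 1 / ((q:ℝ) * qn) - 1 / (qn * Q) := by
            have he : 1 / ((q:ℝ) * qn) - 1 / (qn * Q) = (Q - q) / ((q:ℝ) * qn * Q) := by
              field_simp
            rw [he]
            have h1 : 1 / (2 * (q:ℝ) * q * Q) ≤ 1 / ((q:ℝ) * qn * Q) := by
              apply one_div_le_one_div_of_le (by positivity)
              nlinarith [mul_le_mul_of_nonneg_right (mul_le_mul_of_nonneg_left hqnq
                (by linarith : (0:ℝ) ≤ (q:ℝ))) (by linarith : (0:ℝ) ≤ Q),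
                mul_pos (mul_pos hqrpos hqrpos) (by linarith : (0:ℝ) < Q)]
            have h2 : 1 / ((q:ℝ) * qn * Q) ≤ (Q - q) / ((q:ℝ) * qn * Q) := by
              apply div_le_div_of_nonneg_right ?_ (by positivity)
              linarith
            linarith
          linarith
      -- upper bound on Q
      have hQb : Q ≤ Real.exp L * (q:ℝ) ^ (K:ℝ) := by
        have h1 := hgrow n hcase
        have h2 : Real.log qn ≤ Real.log (q:ℝ) := Real.log_le_log (by linarith) hqnq
        have h3 : Real.log Q ≤ K * Real.log (q:ℝ) + L := by nlinarith [logq_nonneg hx hirr n]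
        calc Q = Real.exp (Real.log Q) := (Real.exp_log (by linarith)).symm
        _ ≤ Real.exp (K * Real.log (q:ℝ) + L) := Real.exp_le_exp.mpr h3
        _ = Real.exp L * (q:ℝ) ^ (K:ℝ) := by
            rw [Real.exp_add, Real.rpow_def_of_pos hqrpos, mul_comm (Real.log (q:ℝ)) K, mul_comm]
      -- combine
      have hcomb : (q:ℝ) ≤ 2 * Real.exp L := by
        have h1 : 1 / (2 * (q:ℝ) * q * Q) ≤ (q:ℝ) ^ (-c') := le_trans hlow hr
        have h2 : 1 ≤ (q:ℝ) ^ (-c') * (2 * (q:ℝ) * q * Q) := by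
          rw [div_le_iff₀ (by positivity)] at h1
          linarith
        have h3 : (q:ℝ) ^ (-c') * (2 * (q:ℝ) * q * Q)
            ≤ (q:ℝ) ^ (-c') * (2 * (q:ℝ) * q * (Real.exp L * (q:ℝ) ^ (K:ℝ))) := by
          apply mul_le_mul_of_nonneg_left ?_ (by positivity)
          apply mul_le_mul_of_nonneg_left hQb (by positivity)
        have h4 : (q:ℝ) ^ (-c') * (2 * (q:ℝ) * q * (Real.exp L * (q:ℝ) ^ (K:ℝ)))
            = 2 * Real.exp L / (q:ℝ) := by
          have e1 : (q:ℝ) ^ (-c') * (q:ℝ) ^ (K:ℝ) = (q:ℝ) ^ (-(3:ℝ)) := by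
            rw [← Real.rpow_add hqrpos]
            norm_num [hc']
          have e2 : (q:ℝ) ^ (-(3:ℝ)) = ((q:ℝ) ^ (3:ℕ))⁻¹ := by
            rw [Real.rpow_neg (by linarith), ← Real.rpow_natCast (q:ℝ) 3]
            norm_num
          calc (q:ℝ) ^ (-c') * (2 * (q:ℝ) * q * (Real.exp L * (q:ℝ) ^ (K:ℝ)))
              = ((q:ℝ) ^ (-c') * (q:ℝ) ^ (K:ℝ)) * (2 * (q:ℝ) * q * Real.exp L) := by ring
          _ = (q:ℝ) ^ (-(3:ℝ)) * (2 * (q:ℝ) * q * Real.exp L) := by rw [e1]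
          _ = ((q:ℝ) ^ (3:ℕ))⁻¹ * (2 * (q:ℝ) * q * Real.exp L) := by rw [e2]
          _ = 2 * Real.exp L / (q:ℝ) := by
              field_simp
        have h5 : 1 ≤ 2 * Real.exp L / (q:ℝ) := by
          rw [← h4]; linarith
        rw [le_div_iff₀ hqrpos] at h5
        linarith
      exact le_trans hcomb (le_max_right _ _)
  -- numerator bound and finiteness
  have hx1 : |x| ≤ 1 := by
    rw [abs_le]; exact ⟨by linarith [hx.1], hx.2⟩
  set A : ℤ := ⌈2 * (B + 1)⌉ with hA
  set Bn : ℕ := ⌈B⌉₊ with hBn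
  have hsub : {r : ℚ | |x - (r : ℝ)| ≤ (r.den : ℝ) ^ (-c')}
      ⊆ (fun r : ℚ => (r.num, r.den)) ⁻¹' (Set.Icc (-A) A ×ˢ Set.Iic Bn) := by
    intro r hr
    simp only [Set.mem_setOf_eq] at hr
    have hdb := hdenb r hr
    have hden1 : (1:ℝ) ≤ (r.den : ℝ) := by exact_mod_cast r.pos
    have hb1 : (r.den : ℝ) ^ (-c') ≤ 1 :=
      Real.rpow_le_one_of_one_le_of_nonpos hden1 (by linarith)
    have hrabs : |(r:ℝ)| ≤ 2 := by
      have h1 : |(r:ℝ)| - |x| ≤ |x - (r:ℝ)| := by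
        rw [abs_sub_comm]
        exact le_trans (abs_sub_abs_le_abs_sub _ _) (le_refl _)
      linarith
    have hnum : |(r.num : ℝ)| ≤ 2 * (B + 1) := by
      have h1 : (r:ℝ) = (r.num : ℝ) / (r.den : ℝ) := by rw [Rat.cast_def]
      have h2 : |(r.num : ℝ)| = |(r:ℝ)| * (r.den : ℝ) := by
        rw [h1, abs_div, abs_of_pos (by linarith : (0:ℝ) < (r.den:ℝ))]
        field_simp
      rw [h2]
      have hB0 : (0:ℝ) ≤ B := le_trans (by linarith) hdb
      nlinarith [abs_nonneg (r:ℝ)]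
    constructor
    · simp only [Set.mem_Icc]
      have h1 : (2 * (B+1) : ℝ) ≤ (A : ℝ) := Int.le_ceil _
      rw [abs_le] at hnum
      constructor
      · have : -(A:ℝ) ≤ (r.num : ℝ) := by linarith
        exact_mod_cast this
      · have : (r.num : ℝ) ≤ (A:ℝ) := by linarith
        exact_mod_cast this
    · simp only [Set.mem_Iic]
      have h1 : B ≤ (Bn : ℝ) := Nat.le_ceil _
      have : (r.den : ℝ) ≤ (Bn : ℝ) := by linarith
      exact_mod_cast this
  have hfinpre : ((fun r : ℚ => (r.num, r.den)) ⁻¹' (Set.Icc (-A) A ×ˢ Set.Iic Bn)).Finite := by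
    apply Set.Finite.preimage
    · apply Set.injOn_of_injective
      intro a b h
      exact Rat.ext (congrArg Prod.fst h) (congrArg Prod.snd h)
    · exact (Set.finite_Icc _ _).prod (Set.finite_Iic _)
  exact H c' hc'pos (hfinpre.subset hsub)

end Aux

theorem stmt6 (x : ℝ) (hx : x ∈ Icc (0:ℝ) 1) (hirr : Irrational x) :
    (∀ c : ℝ, 0 < c → {r : ℚ | |x - (r : ℝ)| ≤ (r.den : ℝ) ^ (-c)}.Infinite) ↔
      (∀ c : ℝ, 0 < c →
        {n : ℕ | c * ∑ j ∈ Finset.range n, Real.log (1 + (cfOmega x j : ℝ))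
          ≤ Real.log (1 + (cfOmega x n : ℝ))}.Infinite) := by
  constructor
  · intro H c hc
    exact dir_mp hx hirr H c hc
  · intro H c hc
    exact dir_mpr hx hirr H c hc
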